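/- Let p > 1, d > 0, l ≥ 0, and define f(t) = (1/(1-p))((t+d)^{1-p} - (l+d)^{1-p}) for t ∈ [0, l]. Then for all 0 ≤ b < a ≤ l: ((a-b)/(a+d))^p ≤ |log(a+d) - log(b+d)|^p ≤ (a-b)^{p-1}(f(a) - f(b)). -/

import Mathlib

open MeasureTheory Real Set

private lemma aux_int_inv (d a b : ℝ) (hd : 0 < d) (hb : 0 ≤ b) (hba : b < a) :
    ∫ x in b..a, (x+d)⁻¹ = Real.log (a+d) - Real.log (b+d) := by
  have h1 := intervalIntegral.integral_comp_add_right (a := b) (b := a) (fun x => x⁻¹) d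
  rw [h1, integral_inv (by
    rw [Set.uIcc_of_le (by linarith)]
    rintro ⟨h2, h3⟩; linarith)]
  rw [Real.log_div (by linarith) (by linarith)]

private lemma aux_int_rpow (p d a b : ℝ) (hp : 1 < p) (hd : 0 < d) (hb : 0 ≤ b) (hba : b < a) :
    ∫ x in b..a, (x+d)^(-p) = ((a+d)^(1-p) - (b+d)^(1-p)) / (1-p) := by
  have h1 := intervalIntegral.integral_comp_add_right (a := b) (b := a) (fun x => x^(-p)) d
  rw [h1, integral_rpow (Or.inr ⟨by intro h; rw [neg_eq_iff_eq_neg] at h; linarith [h ▸ hp], by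
    rw [Set.uIcc_of_le (by linarith)]
    rintro ⟨h2, h3⟩; linarith⟩)]
  ring_nf

private lemma aux_jensen (p d a b : ℝ) (hp : 1 < p) (hd : 0 < d) (hb : 0 ≤ b) (hba : b < a) :
    (⨍ x in Icc b a, (x+d)⁻¹) ^ p ≤ ⨍ x in Icc b a, ((x+d)⁻¹) ^ p := by
  have had : 0 < a + d := by linarith
  have hcont : ContinuousOn (fun x : ℝ => (x+d)⁻¹) (Icc b a) := by
    apply ContinuousOn.inv₀ (by fun_prop)
    rintro x ⟨h1, h2⟩; exact ne_of_gt (by linarith)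
  have hconv : ConvexOn ℝ (Ici 0) fun x : ℝ => x ^ p := convexOn_rpow hp.le
  have hgc : ContinuousOn (fun x : ℝ => x ^ p) (Ici 0) := fun x hx =>
    (Real.continuousAt_rpow_const x p (Or.inr (by positivity))).continuousWithinAt
  have h0 : volume (Icc b a) ≠ 0 := by
    simp [Real.volume_Icc]; linarith
  have ht : volume (Icc b a) ≠ ⊤ := by simp [Real.volume_Icc]
  have hfs : ∀ᵐ x ∂(volume.restrict (Icc b a)), (x+d)⁻¹ ∈ Ici (0:ℝ) := by
    filter_upwards [ae_restrict_mem measurableSet_Icc] with x hx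
    have hxd : 0 < x + d := by have := hx.1; linarith
    exact Set.mem_Ici.2 (inv_nonneg.2 hxd.le)
  have hfi : IntegrableOn (fun x : ℝ => (x+d)⁻¹) (Icc b a) := hcont.integrableOn_Icc
  have hgi : IntegrableOn ((fun x : ℝ => x ^ p) ∘ fun x : ℝ => (x+d)⁻¹) (Icc b a) := by
    apply ContinuousOn.integrableOn_Icc
    apply hcont.rpow_const
    rintro x ⟨h1, h2⟩
    exact Or.inr (by positivity)
  exact hconv.map_set_average_le hgc isClosed_Ici h0 ht hfs hfi hgi

/-- Logarithmic-case algebraic inequality (`γ = 0`, `β = -(p-1)`): with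
`f(t) = (1/(1-p))((t+d)^(1-p) - (l+d)^(1-p))` on `[0, l]`, for `0 ≤ b < a ≤ l`,
`((a-b)/(a+d))^p ≤ |log(a+d) - log(b+d)|^p ≤ (a-b)^(p-1)(f(a) - f(b))`. -/
theorem stmt_14 (p d l a b : ℝ) (hp : 1 < p) (hd : 0 < d) (hl : 0 ≤ l)
    (hb : 0 ≤ b) (hba : b < a) (hal : a ≤ l) :
    ((a - b) / (a + d)) ^ p ≤ |Real.log (a + d) - Real.log (b + d)| ^ p ∧
      |Real.log (a + d) - Real.log (b + d)| ^ p ≤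
        (a - b) ^ (p - 1) *
          ((1 / (1 - p)) * ((a + d) ^ (1 - p) - (l + d) ^ (1 - p)) -
            (1 / (1 - p)) * ((b + d) ^ (1 - p) - (l + d) ^ (1 - p))) := by
  have had : 0 < a + d := by linarith
  have hbd : 0 < b + d := by linarith
  have hab : 0 < a - b := by linarith
  have hLpos : 0 < Real.log (a+d) - Real.log (b+d) := by
    have := Real.log_lt_log hbd (show b+d < a+d by linarith)
    linarith
  have habs : |Real.log (a+d) - Real.log (b+d)| = Real.log (a+d) - Real.log (b+d) :=
    abs_of_pos hLpos
  constructor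
  · apply Real.rpow_le_rpow (by positivity) ?_ (by linarith)
    rw [habs]
    have h := Real.log_le_sub_one_of_pos (show 0 < (b+d)/(a+d) by positivity)
    rw [Real.log_div hbd.ne' had.ne'] at h
    have heq : (a-b)/(a+d) = 1 - (b+d)/(a+d) := by field_simp; ring
    rw [heq]; linarith
  · rw [habs]
    have hμ : (volume (Icc b a)).toReal = a - b := by
      rw [Real.volume_Icc, ENNReal.toReal_ofReal hab.le]
    have hI1 : ∫ x in Icc b a, (x+d)⁻¹ = Real.log (a+d) - Real.log (b+d) := by
      rw [MeasureTheory.integral_Icc_eq_integral_Ioc,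
        ← intervalIntegral.integral_of_le hba.le, aux_int_inv d a b hd hb hba]
    have hI2 : ∫ x in Icc b a, ((x+d)⁻¹) ^ p = ((a+d)^(1-p) - (b+d)^(1-p)) / (1-p) := by
      rw [MeasureTheory.integral_Icc_eq_integral_Ioc,
        ← intervalIntegral.integral_of_le hba.le,
        ← aux_int_rpow p d a b hp hd hb hba]
      apply intervalIntegral.integral_congr
      intro x hx
      rw [Set.uIcc_of_le hba.le] at hx
      have hxd : 0 < x + d := by have := hx.1; linarith
      simp only
      rw [Real.inv_rpow hxd.le, ← Real.rpow_neg hxd.le]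
    have key := aux_jensen p d a b hp hd hb hba
    rw [setAverage_eq, setAverage_eq, measureReal_def, hμ, smul_eq_mul, smul_eq_mul, hI1, hI2] at key
    set L := Real.log (a+d) - Real.log (b+d) with hL
    set I := ((a+d)^(1-p) - (b+d)^(1-p)) / (1-p) with hI
    rw [Real.mul_rpow (inv_nonneg.2 hab.le) hLpos.le] at key
    have hmul := mul_le_mul_of_nonneg_left key (Real.rpow_nonneg hab.le p)
    have h1 : (a-b)^p * ((a-b)⁻¹ ^ p * L ^ p) = L ^ p := by
      rw [← mul_assoc, ← Real.mul_rpow hab.le (inv_nonneg.2 hab.le),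
        mul_inv_cancel₀ hab.ne', Real.one_rpow, one_mul]
    have h2 : (a-b)^p * ((a-b)⁻¹ * I) = (a-b)^(p-1) * I := by
      rw [Real.rpow_sub hab, Real.rpow_one]
      field_simp
    rw [h1, h2] at hmul
    calc L ^ p ≤ (a-b)^(p-1) * I := hmul
      _ = (a - b) ^ (p - 1) *
          ((1 / (1 - p)) * ((a + d) ^ (1 - p) - (l + d) ^ (1 - p)) -
            (1 / (1 - p)) * ((b + d) ^ (1 - p) - (l + d) ^ (1 - p))) := by
        rw [hI]; ring
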